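/- For K = 3, let R₁, R₂, R₃ ∈ ℝ and define l* as the smallest index l ∈ {1,2,3} maximizing the partial sum S_l = R₁ + ⋯ + R_l, with l* = 0 if max(S₁,S₂,S₃) ≤ 0. Define D_i = 1 if i ≤ l*, else 0. Then D₁ = 1{S₁ > 0 ∨ S₂ > 0 ∨ S₃ > 0}, D₂ = D₁·1{R₂ > 0 ∨ R₂ + R₃ > 0}, and D₃ = D₂·1{R₃ > 0}, and moreover D₁R₁ + D₂R₂ + D₃R₃ = max{0, S₁, S₂, S₃}. -/

import Mathlib

/-- The smallest index l ∈ {1,2,3} maximizing the prefix sum S_l, with value 0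
if max(S₁,S₂,S₃) ≤ 0. -/
noncomputable def lstar (R₁ R₂ R₃ : ℝ) : ℕ :=
  if max R₁ (max (R₁ + R₂) (R₁ + R₂ + R₃)) ≤ 0 then 0
  else if max (R₁ + R₂) (R₁ + R₂ + R₃) ≤ R₁ then 1
  else if R₁ + R₂ + R₃ ≤ R₁ + R₂ then 2
  else 3

/-- The prefix-of-ones decision vector: D_i = 1 iff i ≤ l*. -/
noncomputable def Dpol (R₁ R₂ R₃ : ℝ) (i : ℕ) : ℝ :=
  if i ≤ lstar R₁ R₂ R₃ then 1 else 0

/-- The explicit K=3 optimal prefix policy: cascaded indicator characterization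
and the value identity D₁R₁ + D₂R₂ + D₃R₃ = max{0,S₁,S₂,S₃}. -/
theorem optimal_prefix_policy_K3 (R₁ R₂ R₃ : ℝ) :
    (Dpol R₁ R₂ R₃ 1
      = if 0 < R₁ ∨ 0 < R₁ + R₂ ∨ 0 < R₁ + R₂ + R₃ then (1:ℝ) else 0) ∧
    (Dpol R₁ R₂ R₃ 2
      = Dpol R₁ R₂ R₃ 1 * (if 0 < R₂ ∨ 0 < R₂ + R₃ then (1:ℝ) else 0)) ∧
    (Dpol R₁ R₂ R₃ 3
      = Dpol R₁ R₂ R₃ 2 * (if 0 < R₃ then (1:ℝ) else 0)) ∧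
    (Dpol R₁ R₂ R₃ 1 * R₁ + Dpol R₁ R₂ R₃ 2 * R₂ + Dpol R₁ R₂ R₃ 3 * R₃
      = max 0 (max R₁ (max (R₁ + R₂) (R₁ + R₂ + R₃)))) := by
  rcases le_or_gt (max R₁ (max (R₁ + R₂) (R₁ + R₂ + R₃))) 0 with h0 | h0
  · have e : lstar R₁ R₂ R₃ = 0 := by unfold lstar; rw [if_pos h0]
    rw [max_le_iff, max_le_iff] at h0
    obtain ⟨a1, a2, a3⟩ := h0
    simp only [Dpol, e]
    norm_num
    exact ⟨a1, a2, a3⟩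
  · rcases le_or_gt (max (R₁ + R₂) (R₁ + R₂ + R₃)) R₁ with h1 | h1
    · have e : lstar R₁ R₂ R₃ = 1 := by
        unfold lstar; rw [if_neg (not_le.2 h0), if_pos h1]
      rw [max_le_iff] at h1
      obtain ⟨b2, b3⟩ := h1
      have hr1 : 0 < R₁ := by
        rcases lt_max_iff.mp h0 with h | h
        · exact h
        · rcases lt_max_iff.mp h with h' | h' <;> linarith
      simp only [Dpol, e]
      norm_num
      refine ⟨fun h => absurd h (not_le.2 hr1), ?_, ?_⟩
      · constructor <;> linarith
      · rw [max_eq_right (le_max_iff.2 (Or.inl hr1.le)),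
          max_eq_left (max_le_iff.2 ⟨b2, b3⟩)]
    · rcases le_or_gt (R₁ + R₂ + R₃) (R₁ + R₂) with h2 | h2
      · have e : lstar R₁ R₂ R₃ = 2 := by
          unfold lstar; rw [if_neg (not_le.2 h0), if_neg (not_le.2 h1), if_pos h2]
        have hs2 : R₁ < R₁ + R₂ := by
          rcases lt_max_iff.mp h1 with h | h <;> linarith
        have hs2pos : 0 < R₁ + R₂ := by
          rcases lt_max_iff.mp h0 with h | h
          · linarith
          · rcases lt_max_iff.mp h with h' | h' <;> linarith
        simp only [Dpol, e]
        norm_num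
        refine ⟨fun _ h => absurd h (not_le.2 hs2pos),
          fun h => absurd h (not_le.2 (by linarith : (0:ℝ) < R₂)), ?_, ?_⟩
        · linarith
        · rw [max_eq_left h2, max_eq_right hs2.le, max_eq_right hs2pos.le]
      · have e : lstar R₁ R₂ R₃ = 3 := by
          unfold lstar
          rw [if_neg (not_le.2 h0), if_neg (not_le.2 h1), if_neg (not_le.2 h2)]
        have hs3 : R₁ < R₁ + R₂ + R₃ := by
          rcases lt_max_iff.mp h1 with h | h <;> linarith
        have hs3pos : 0 < R₁ + R₂ + R₃ := by
          rcases lt_max_iff.mp h0 with h | h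
          · linarith
          · rcases lt_max_iff.mp h with h' | h' <;> linarith
        simp only [Dpol, e]
        norm_num
        refine ⟨fun _ _ => hs3pos,
          fun _ => (by linarith : (0:ℝ) < R₂ + R₃),
          (by linarith : (0:ℝ) < R₃), ?_⟩
        rw [max_eq_right h2.le, max_eq_right hs3.le, max_eq_right hs3pos.le]
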